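/- For every n ≥ 1, the generating function identity (1+x)(1+x²)···(1+xⁿ) / ((1-x^{n+1})(1-x^{n+2})···(1-x^{2n})) = ∏_{i=1}^{n} 1/(1-x^{2i-1}) holds as formal power series. -/

import Mathlib

open PowerSeries

lemma myprod_inv {ι : Type*} (s : Finset ι) (f : ι → PowerSeries ℚ) :
    (∏ i ∈ s, f i)⁻¹ = ∏ i ∈ s, (f i)⁻¹ := by
  induction s using Finset.cons_induction with
  | empty => simp
  | cons a s ha ih =>
    rw [Finset.prod_cons, Finset.prod_cons, PowerSeries.mul_inv_rev, mul_comm, ih]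

lemma myprod_pair (n : ℕ) (g : ℕ → PowerSeries ℚ) :
    ∏ i ∈ Finset.range (2 * n), g i = ∏ i ∈ Finset.range n, (g (2 * i) * g (2 * i + 1)) := by
  induction n with
  | zero => simp
  | succ n ih =>
    rw [show 2 * (n + 1) = (2 * n) + 1 + 1 by ring, Finset.prod_range_succ,
      Finset.prod_range_succ, Finset.prod_range_succ, ih]
    rw [mul_assoc]

/-- `(1+x)(1+x²)⋯(1+xⁿ) / ((1-x^{n+1})⋯(1-x^{2n})) = ∏_{i=1}^n 1/(1-x^{2i-1})`
as formal power series over `ℚ`. -/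
theorem bounded_gf_eq_odd_gf (n : ℕ) (hn : 1 ≤ n) :
    (∏ i ∈ Finset.range n, (1 + (PowerSeries.X : PowerSeries ℚ) ^ (i + 1))) *
      (∏ i ∈ Finset.range n, (1 - (PowerSeries.X : PowerSeries ℚ) ^ (n + 1 + i)))⁻¹ =
    ∏ i ∈ Finset.range n, (1 - (PowerSeries.X : PowerSeries ℚ) ^ (2 * i + 1))⁻¹ := by
  set A : PowerSeries ℚ := ∏ i ∈ Finset.range n, (1 + (PowerSeries.X : PowerSeries ℚ) ^ (i + 1)) with hAdef
  set B : PowerSeries ℚ := ∏ i ∈ Finset.range n, (1 - (PowerSeries.X : PowerSeries ℚ) ^ (n + 1 + i)) with hBdef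
  set C : PowerSeries ℚ := ∏ i ∈ Finset.range n, (1 - (PowerSeries.X : PowerSeries ℚ) ^ (2 * i + 1)) with hCdef
  have hA : constantCoeff (R := ℚ) A ≠ 0 := by
    simp [hAdef, map_prod]
  have hD : constantCoeff (R := ℚ) (∏ i ∈ Finset.range n, (1 - (PowerSeries.X : PowerSeries ℚ) ^ (i + 1))) ≠ 0 := by
    simp [map_prod]
  have hDne : (∏ i ∈ Finset.range n, (1 - (PowerSeries.X : PowerSeries ℚ) ^ (i + 1))) ≠ 0 := by
    intro h; apply hD; rw [h]; simp
  have key : A * C = B := by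
    apply mul_right_cancel₀ hDne
    have h1 : A * (∏ i ∈ Finset.range n, (1 - (PowerSeries.X : PowerSeries ℚ) ^ (i + 1)))
        = ∏ i ∈ Finset.range n, (1 - (PowerSeries.X : PowerSeries ℚ) ^ (2 * i + 2)) := by
      rw [hAdef, ← Finset.prod_mul_distrib]
      refine Finset.prod_congr rfl fun i _ => ?_
      rw [show 2 * i + 2 = (i + 1) + (i + 1) by ring, pow_add]
      ring
    calc A * C * (∏ i ∈ Finset.range n, (1 - (PowerSeries.X : PowerSeries ℚ) ^ (i + 1)))
        = (A * (∏ i ∈ Finset.range n, (1 - (PowerSeries.X : PowerSeries ℚ) ^ (i + 1)))) * C := by ring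
      _ = (∏ i ∈ Finset.range n, (1 - (PowerSeries.X : PowerSeries ℚ) ^ (2 * i + 2))) * C := by rw [h1]
      _ = ∏ i ∈ Finset.range n, ((1 - (PowerSeries.X : PowerSeries ℚ) ^ (2 * i + 1))
            * (1 - (PowerSeries.X : PowerSeries ℚ) ^ (2 * i + 2))) := by
            rw [hCdef, ← Finset.prod_mul_distrib]; exact Finset.prod_congr rfl fun i _ => by ring
      _ = ∏ i ∈ Finset.range (2 * n), (1 - (PowerSeries.X : PowerSeries ℚ) ^ (i + 1)) := by
            rw [myprod_pair n (fun i => 1 - (PowerSeries.X : PowerSeries ℚ) ^ (i + 1))]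
      _ = B * (∏ i ∈ Finset.range n, (1 - (PowerSeries.X : PowerSeries ℚ) ^ (i + 1))) := by
            rw [show 2 * n = n + n by ring, Finset.prod_range_add, hBdef, mul_comm]
            congr 1
            exact Finset.prod_congr rfl fun i _ => by rw [show n + i + 1 = n + 1 + i by ring]
  have hC : constantCoeff (R := ℚ) C ≠ 0 := by
    simp [hCdef, map_prod]
  rw [← key, PowerSeries.mul_inv_rev, ← mul_assoc, mul_comm A C⁻¹, mul_assoc,
    PowerSeries.mul_inv_cancel A hA, mul_one, hCdef, myprod_inv]
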